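/- Let U and W be independent real random variables with U ~ N(0, σ²) and W ~ N(0, τ²), where σ > 0 and τ > 0, and let β ∈ ℝ. Then P[U·(βU + W) > 0] − P[U·(βU + W) < 0] = (2/π)·arctan(βσ/τ). -/

import Mathlib

open MeasureTheory ProbabilityTheory

section GaussianSignAux

open Real Set

lemma wedge_periodic (a θ : ℝ) :
    cos (θ + π) * (a * cos (θ + π) + sin (θ + π)) = cos θ * (a * cos θ + sin θ) := by
  simp [Real.cos_add, Real.sin_add]; ring

lemma wedge_measurable (a : ℝ) :
    MeasurableSet {θ : ℝ | 0 < cos θ * (a * cos θ + sin θ)} := by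
  apply measurableSet_lt measurable_const
  fun_prop

lemma wedge_inter_center (a : ℝ) :
    {θ : ℝ | 0 < cos θ * (a * cos θ + sin θ)} ∩ Ioo (-(π/2)) (π/2)
      = Ioo (-Real.arctan a) (π/2) := by
  have harc1 : -(π/2) < -Real.arctan a := by
    have := Real.arctan_lt_pi_div_two a; linarith
  have harc3 : -Real.arctan a < π/2 := by
    have := Real.neg_pi_div_two_lt_arctan a; linarith
  have harc2 : Real.arctan (-a) = -Real.arctan a := Real.arctan_neg a
  ext θ
  simp only [mem_inter_iff, mem_setOf_eq, mem_Ioo]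
  constructor
  · rintro ⟨h, h1, h2⟩
    refine ⟨?_, h2⟩
    have hc : 0 < cos θ := Real.cos_pos_of_mem_Ioo ⟨h1, h2⟩
    have ht : a * cos θ + sin θ = cos θ * (a + tan θ) := by
      rw [Real.tan_eq_sin_div_cos]; field_simp
    rw [ht] at h
    have h3 : 0 < a + tan θ := by
      by_contra hle
      push_neg at hle
      nlinarith [mul_nonneg (mul_nonneg hc.le hc.le) (neg_nonneg.mpr hle)]
    by_contra hle
    push_neg at hle
    have h5 : tan θ ≤ tan (-Real.arctan a) :=
      Real.strictMonoOn_tan.monotoneOn ⟨h1, h2⟩ ⟨harc1, harc3⟩ hle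
    rw [← harc2, Real.tan_arctan] at h5
    linarith
  · rintro ⟨h1, h2⟩
    have h1' : -(π/2) < θ := lt_trans harc1 h1
    refine ⟨?_, h1', h2⟩
    have hc : 0 < cos θ := Real.cos_pos_of_mem_Ioo ⟨h1', h2⟩
    have h4 : tan (-Real.arctan a) < tan θ :=
      Real.strictMonoOn_tan ⟨harc1, harc3⟩ ⟨h1', h2⟩ h1
    rw [← harc2, Real.tan_arctan] at h4
    have ht : a * cos θ + sin θ = cos θ * (a + tan θ) := by
      rw [Real.tan_eq_sin_div_cos]; field_simp
    rw [ht]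
    exact mul_pos hc (mul_pos hc (by linarith))

lemma wedge_measure (a : ℝ) :
    volume ({θ : ℝ | 0 < cos θ * (a * cos θ + sin θ)} ∩ Ioo (-π) π)
      = ENNReal.ofReal (π + 2 * Real.arctan a) := by
  set T := {θ : ℝ | 0 < cos θ * (a * cos θ + sin θ)} with hT
  have hTm : MeasurableSet T := wedge_measurable a
  have hcenter : T ∩ Ioo (-(π/2)) (π/2) = Ioo (-Real.arctan a) (π/2) :=
    wedge_inter_center a
  have hmem : ∀ θ : ℝ, θ + π ∈ T ↔ θ ∈ T := by
    intro θ
    simp only [hT, mem_setOf_eq, wedge_periodic]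
  have hpi := Real.pi_pos
  have harcub := Real.arctan_lt_pi_div_two a
  have harclb := Real.neg_pi_div_two_lt_arctan a
  have hsplit : T ∩ Ioo (-π) π =
      (T ∩ Ioo (-π) (-(π/2))) ∪ (T ∩ Ioo (-(π/2)) (π/2)) ∪ (T ∩ Ioo (π/2) π) := by
    ext θ
    simp only [mem_union, mem_inter_iff, mem_Ioo]
    constructor
    · rintro ⟨ht, h1, h2⟩
      have hne1 : θ ≠ -(π/2) := by
        rintro rfl
        simp only [hT, mem_setOf_eq, Real.cos_neg, Real.cos_pi_div_two] at ht
        norm_num at ht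
      have hne2 : θ ≠ π/2 := by
        rintro rfl
        simp only [hT, mem_setOf_eq, Real.cos_pi_div_two] at ht
        norm_num at ht
      rcases lt_trichotomy θ (-(π/2)) with h | h | h
      · exact Or.inl (Or.inl ⟨ht, h1, h⟩)
      · exact absurd h hne1
      · rcases lt_trichotomy θ (π/2) with h' | h' | h'
        · exact Or.inl (Or.inr ⟨ht, h, h'⟩)
        · exact absurd h' hne2
        · exact Or.inr ⟨ht, h', h2⟩
    · rintro ((⟨ht, h1, h2⟩ | ⟨ht, h1, h2⟩) | ⟨ht, h1, h2⟩) <;>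
        exact ⟨ht, by constructor <;> linarith⟩
  have hleft : T ∩ Ioo (-π) (-(π/2)) = (fun θ => θ + π) ⁻¹' (T ∩ Ioo 0 (π/2)) := by
    ext θ
    simp only [mem_inter_iff, mem_Ioo, mem_preimage, hmem]
    constructor
    · rintro ⟨ht, h1, h2⟩; exact ⟨ht, by linarith, by linarith⟩
    · rintro ⟨ht, h1, h2⟩; exact ⟨ht, by linarith, by linarith⟩
  have hright : T ∩ Ioo (π/2) π = (fun θ => θ + (-π)) ⁻¹' (T ∩ Ioo (-(π/2)) 0) := by
    ext θ
    have hmem' : θ + -π ∈ T ↔ θ ∈ T := by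
      rw [← hmem (θ + -π)]
      norm_num
    simp only [mem_inter_iff, mem_Ioo, mem_preimage, hmem']
    constructor
    · rintro ⟨ht, h1, h2⟩; exact ⟨ht, by linarith, by linarith⟩
    · rintro ⟨ht, h1, h2⟩; exact ⟨ht, by linarith, by linarith⟩
  have hml : volume (T ∩ Ioo (-π) (-(π/2))) = volume (T ∩ Ioo 0 (π/2)) := by
    rw [hleft, measure_preimage_add_right]
  have hmr : volume (T ∩ Ioo (π/2) π) = volume (T ∩ Ioo (-(π/2)) 0) := by
    rw [hright, measure_preimage_add_right]
  have hsub1 : T ∩ Ioo 0 (π/2) = Ioo (max (-Real.arctan a) 0) (π/2) := by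
    rw [show Ioo (0:ℝ) (π/2) = Ioo (-(π/2)) (π/2) ∩ Ioo 0 (π/2) by
        rw [Set.Ioo_inter_Ioo, min_self, max_eq_right (by linarith : -(π/2) ≤ (0:ℝ))],
      ← Set.inter_assoc, hcenter, Set.Ioo_inter_Ioo, min_self]
  have hsub2 : T ∩ Ioo (-(π/2)) 0 = Ioo (-Real.arctan a) 0 := by
    rw [show Ioo (-(π/2)) (0:ℝ) = Ioo (-(π/2)) (π/2) ∩ Ioo (-(π/2)) 0 by
        rw [Set.Ioo_inter_Ioo, max_self, min_eq_right (by linarith : (0:ℝ) ≤ π/2)],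
      ← Set.inter_assoc, hcenter, Set.Ioo_inter_Ioo,
      max_eq_left (by linarith : -(π/2) ≤ -Real.arctan a),
      min_eq_right (by linarith : (0:ℝ) ≤ π/2)]
  have hd1 : Disjoint ((T ∩ Ioo (-π) (-(π/2))) ∪ (T ∩ Ioo (-(π/2)) (π/2))) (T ∩ Ioo (π/2) π) := by
    apply Set.disjoint_left.mpr
    rintro θ (⟨-, h1, h2⟩ | ⟨-, h1, h2⟩) ⟨-, h1', h2'⟩ <;> linarith
  have hd2 : Disjoint (T ∩ Ioo (-π) (-(π/2))) (T ∩ Ioo (-(π/2)) (π/2)) := by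
    apply Set.disjoint_left.mpr
    rintro θ ⟨-, h1, h2⟩ ⟨-, h1', h2'⟩; linarith
  rw [hsplit, measure_union hd1 (hTm.inter measurableSet_Ioo),
    measure_union hd2 (hTm.inter measurableSet_Ioo), hml, hmr, hsub1, hsub2,
    hcenter, Real.volume_Ioo, Real.volume_Ioo, Real.volume_Ioo]
  rcases le_or_gt 0 a with ha | ha
  · have h0 : 0 ≤ Real.arctan a := by
      rw [← Real.arctan_zero]
      exact Real.arctan_strictMono.monotone ha
    rw [max_eq_right (by linarith : -Real.arctan a ≤ 0),
      ← ENNReal.ofReal_add (by linarith) (by linarith),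
      ← ENNReal.ofReal_add (by linarith) (by linarith)]
    congr 1; ring
  · have h0 : Real.arctan a < 0 := by
      rw [← Real.arctan_zero]
      exact Real.arctan_strictMono ha
    rw [max_eq_left (by linarith : (0:ℝ) ≤ -Real.arctan a),
      show ENNReal.ofReal ((0:ℝ) - -Real.arctan a) = 0 from
        ENNReal.ofReal_eq_zero.mpr (by linarith),
      add_zero, ← ENNReal.ofReal_add (by linarith) (by linarith)]
    congr 1; ring

lemma radial_integral : ∫ r in Ioi (0:ℝ), r * Real.exp (-r^2/2) = 1 := by
  have hderiv : ∀ x ∈ Ioi (0:ℝ), HasDerivAt (fun r : ℝ => -Real.exp (-r^2/2))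
      (x * Real.exp (-x^2/2)) x := by
    intro x _
    have h1 : HasDerivAt (fun r : ℝ => -r^2/2) (-x) x := by
      have := ((hasDerivAt_pow 2 x).div_const 2).neg
      rw [show (fun r : ℝ => -r^2/2) = -fun x => x^2/2 by funext r; rw [Pi.neg_apply]; ring,
        show -x = -((2:ℕ) * x^(2-1)/2) by norm_num]
      exact this
    have h2 := (h1.exp).neg
    rw [show x * Real.exp (-x^2/2) = -(Real.exp (-x^2/2) * -x) by ring]
    exact h2
  have hint : IntegrableOn (fun r : ℝ => r * Real.exp (-r^2/2)) (Ioi 0) volume := by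
    have := (integrable_mul_exp_neg_mul_sq (b := 1/2) (by norm_num)).integrableOn
      (s := Ioi (0:ℝ))
    refine this.congr_fun (fun x _ => by ring_nf) measurableSet_Ioi
  have htend : Filter.Tendsto (fun r : ℝ => -Real.exp (-r^2/2)) Filter.atTop (nhds 0) := by
    rw [show (0:ℝ) = -0 by ring]
    apply Filter.Tendsto.neg
    apply Real.tendsto_exp_atBot.comp
    have h3 := (Filter.tendsto_pow_atTop (two_ne_zero)).const_mul_atTop_of_neg
      (show (-(1:ℝ)/2) < 0 by norm_num)
    exact h3.congr (fun x : ℝ => by ring)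
  have hcont : ContinuousWithinAt (fun r : ℝ => -Real.exp (-r^2/2)) (Ici 0) 0 := by
    apply Continuous.continuousWithinAt
    continuity
  have := integral_Ioi_of_hasDerivAt_of_tendsto hcont hderiv hint htend
  simp at this
  linarith [this]

lemma prod_gaussian_eq :
    (gaussianReal 0 1).prod (gaussianReal 0 1)
      = (volume.prod volume).withDensity
          (fun z : ℝ × ℝ => gaussianPDF 0 1 z.1 * gaussianPDF 0 1 z.2) := by
  refine Measure.prod_eq fun s t hs ht => ?_
  rw [withDensity_apply _ (hs.prod ht), ← Measure.prod_restrict,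
    lintegral_prod_mul (measurable_gaussianPDF 0 1).aemeasurable
      (measurable_gaussianPDF 0 1).aemeasurable,
    gaussianReal_of_var_ne_zero 0 one_ne_zero,
    withDensity_apply _ hs, withDensity_apply _ ht]

lemma wedge_prob (a : ℝ) :
    (gaussianReal 0 1).prod (gaussianReal 0 1) {p : ℝ × ℝ | 0 < p.1 * (a * p.1 + p.2)}
      = ENNReal.ofReal (1/2 + Real.arctan a / π) := by
  have hpi := Real.pi_pos
  set S : Set (ℝ × ℝ) := {p : ℝ × ℝ | 0 < p.1 * (a * p.1 + p.2)} with hS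
  have hSm : MeasurableSet S := by
    apply measurableSet_lt measurable_const
    fun_prop
  set G : ℝ × ℝ → ℝ := fun z => gaussianPDFReal 0 1 z.1 * gaussianPDFReal 0 1 z.2 with hG
  have hGint : Integrable G (volume.prod volume) :=
    (integrable_gaussianPDFReal 0 1).mul_prod (integrable_gaussianPDFReal 0 1)
  have hGnn : ∀ z, 0 ≤ G z := fun z =>
    mul_nonneg (gaussianPDFReal_nonneg 0 1 z.1) (gaussianPDFReal_nonneg 0 1 z.2)
  have step1 : (gaussianReal 0 1).prod (gaussianReal 0 1) S
      = ENNReal.ofReal (∫ z in S, G z ∂(volume.prod volume)) := by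
    rw [prod_gaussian_eq, withDensity_apply _ hSm]
    rw [ofReal_integral_eq_lintegral_ofReal (hGint.restrict) (ae_of_all _ hGnn)]
    congr 1
    funext z
    rw [hG]
    unfold gaussianPDF
    rw [ENNReal.ofReal_mul (gaussianPDFReal_nonneg 0 1 z.1)]
  rw [step1, ← Measure.volume_eq_prod, ← integral_indicator hSm,
    ← integral_comp_polarCoord_symm]
  have key : ∀ p ∈ polarCoord.target,
      p.1 • S.indicator G (polarCoord.symm p)
        = (p.1 * Real.exp (-p.1^2/2)) *
          ((2*π)⁻¹ * ({θ : ℝ | 0 < cos θ * (a * cos θ + sin θ)}.indicator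
            (fun _ => (1:ℝ)) p.2)) := by
    rintro ⟨r, θ⟩ ⟨hr, hθ⟩
    simp only [Set.mem_Ioi] at hr
    have hsymm : polarCoord.symm (r, θ) = (r * cos θ, r * sin θ) := rfl
    have hGval : G (r * cos θ, r * sin θ) = (2*π)⁻¹ * Real.exp (-r^2/2) := by
      simp only [hG, gaussianPDFReal]
      push_cast
      rw [mul_mul_mul_comm, ← mul_inv, Real.mul_self_sqrt (by positivity), ← Real.exp_add]
      rw [mul_one]
      congr 2
      linear_combination (-(r^2)/2) * (Real.sin_sq_add_cos_sq θ)
    have hmemiff : ((r * cos θ, r * sin θ) ∈ S) ↔ 0 < cos θ * (a * cos θ + sin θ) := by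
      simp only [hS, mem_setOf_eq]
      rw [show r * cos θ * (a * (r * cos θ) + r * sin θ)
          = r^2 * (cos θ * (a * cos θ + sin θ)) by ring]
      exact mul_pos_iff_of_pos_left (by positivity)
    rw [hsymm]
    dsimp only
    by_cases hmem : 0 < cos θ * (a * cos θ + sin θ)
    · rw [Set.indicator_of_mem (hmemiff.mpr hmem),
        Set.indicator_of_mem
          (show θ ∈ {θ : ℝ | 0 < cos θ * (a * cos θ + sin θ)} from hmem), hGval]
      rw [smul_eq_mul]
      ring
    · rw [Set.indicator_of_notMem (fun h => hmem (hmemiff.mp h)),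
        Set.indicator_of_notMem
          (show θ ∉ {θ : ℝ | 0 < cos θ * (a * cos θ + sin θ)} from hmem)]
      simp
  rw [setIntegral_congr_fun polarCoord.open_target.measurableSet key,
    show polarCoord.target = Ioi (0:ℝ) ×ˢ Ioo (-π) π from rfl,
    Measure.volume_eq_prod,
    setIntegral_prod_mul (f := fun u : ℝ => u * Real.exp (-u^2/2))
      (g := fun v : ℝ => (2*π)⁻¹ *
        ({θ : ℝ | 0 < cos θ * (a * cos θ + sin θ)}.indicator (fun _ => (1:ℝ)) v)),
    radial_integral, one_mul,
    integral_const_mul, integral_indicator (wedge_measurable a),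
    setIntegral_const, measureReal_restrict_apply (wedge_measurable a), measureReal_def,
    wedge_measure a, smul_eq_mul, mul_one,
    ENNReal.toReal_ofReal (by
      have := Real.neg_pi_div_two_lt_arctan a
      linarith)]
  congr 1
  have harcub := Real.arctan_lt_pi_div_two a
  field_simp

lemma wedge2_measurable (a : ℝ) :
    MeasurableSet {p : ℝ × ℝ | 0 < p.1 * (a * p.1 + p.2)} :=
  measurableSet_lt measurable_const (by fun_prop)

lemma gaussian_neg_invariant :
    Measure.map (fun x : ℝ => -x) (gaussianReal 0 1) = gaussianReal 0 1 := by
  rw [show (fun x : ℝ => -x) = (fun x : ℝ => (-1 : ℝ) * x) by funext x; ring,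
    gaussianReal_map_const_mul]
  norm_num

end GaussianSignAux

section Main
open Real Set

/-- For independent centered Gaussians `U ~ N(0, σ²)` and `W ~ N(0, τ²)` and any `β ∈ ℝ`,
`P[U (βU + W) > 0] - P[U (βU + W) < 0] = (2/π) arctan(β σ / τ)`. -/
theorem gaussian_sign_prob_arctan {Ω : Type*} [MeasureSpace Ω]
    [IsProbabilityMeasure (ℙ : Measure Ω)]
    (U W : Ω → ℝ) (hU : Measurable U) (hW : Measurable W)
    (σ τ : NNReal) (hσ : 0 < σ) (hτ : 0 < τ) (β : ℝ)
    (hind : IndepFun U W ℙ)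
    (hUlaw : Measure.map U ℙ = gaussianReal 0 (σ ^ 2))
    (hWlaw : Measure.map W ℙ = gaussianReal 0 (τ ^ 2)) :
    (ℙ {ω | 0 < U ω * (β * U ω + W ω)}).toReal
        - (ℙ {ω | U ω * (β * U ω + W ω) < 0}).toReal
      = 2 / Real.pi * Real.arctan (β * (σ : ℝ) / (τ : ℝ)) := by
  have hpi := Real.pi_pos
  have hσ0 : (0:ℝ) < σ := hσ
  have hτ0 : (0:ℝ) < τ := hτ
  set a : ℝ := β * (σ:ℝ) / (τ:ℝ) with ha
  set V : Ω → ℝ := fun ω => (σ:ℝ)⁻¹ * U ω with hV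
  set V' : Ω → ℝ := fun ω => (τ:ℝ)⁻¹ * W ω with hV'
  have hVm : Measurable V := hU.const_mul _
  have hV'm : Measurable V' := hW.const_mul _
  have hVlaw : Measure.map V ℙ = gaussianReal 0 1 := by
    rw [show V = (fun x : ℝ => (σ:ℝ)⁻¹ * x) ∘ U from rfl,
      ← Measure.map_map (measurable_const_mul _) hU, hUlaw, gaussianReal_map_const_mul]
    norm_num
    congr 1
    ext
    push_cast
    field_simp
  have hV'law : Measure.map V' ℙ = gaussianReal 0 1 := by
    rw [show V' = (fun x : ℝ => (τ:ℝ)⁻¹ * x) ∘ W from rfl,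
      ← Measure.map_map (measurable_const_mul _) hW, hWlaw, gaussianReal_map_const_mul]
    norm_num
    congr 1
    ext
    push_cast
    field_simp
  have hindV : IndepFun V V' ℙ :=
    hind.comp (measurable_const_mul _) (measurable_const_mul _)
  have hjoint : Measure.map (fun ω => (V ω, V' ω)) ℙ
      = (gaussianReal 0 1).prod (gaussianReal 0 1) := by
    rw [(indepFun_iff_map_prod_eq_prod_map_map hVm.aemeasurable hV'm.aemeasurable).mp hindV,
      hVlaw, hV'law]
  have hprod : ∀ ω, U ω * (β * U ω + W ω) = ((σ:ℝ) * (τ:ℝ)) * (V ω * (a * V ω + V' ω)) := by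
    intro ω
    rw [hV, hV', ha]
    field_simp
  have hA : {ω | 0 < U ω * (β * U ω + W ω)}
      = (fun ω => (V ω, V' ω)) ⁻¹' {p : ℝ × ℝ | 0 < p.1 * (a * p.1 + p.2)} := by
    ext ω
    simp only [mem_setOf_eq, mem_preimage, hprod ω]
    exact mul_pos_iff_of_pos_left (by positivity)
  have hB : {ω | U ω * (β * U ω + W ω) < 0}
      = (fun ω => (V ω, V' ω)) ⁻¹' {p : ℝ × ℝ | p.1 * (a * p.1 + p.2) < 0} := by
    ext ω
    simp only [mem_setOf_eq, mem_preimage, hprod ω]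
    constructor <;> intro h <;> nlinarith [mul_pos hσ0 hτ0]
  have hmA : ℙ {ω | 0 < U ω * (β * U ω + W ω)}
      = ENNReal.ofReal (1/2 + Real.arctan a / π) := by
    rw [hA, ← Measure.map_apply (hVm.prodMk hV'm) (wedge2_measurable a), hjoint,
      wedge_prob a]
  -- the negative event via reflection
  have hBset : {p : ℝ × ℝ | p.1 * (a * p.1 + p.2) < 0}
      = (fun p : ℝ × ℝ => (p.1, -p.2)) ⁻¹' {p : ℝ × ℝ | 0 < p.1 * (-a * p.1 + p.2)} := by
    ext p
    simp only [mem_setOf_eq, mem_preimage]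
    constructor <;> intro h <;> nlinarith
  have hRm : Measurable (fun p : ℝ × ℝ => (p.1, -p.2)) := by fun_prop
  have hRinv : Measure.map (fun p : ℝ × ℝ => (p.1, -p.2))
      ((gaussianReal 0 1).prod (gaussianReal 0 1))
      = (gaussianReal 0 1).prod (gaussianReal 0 1) := by
    rw [show (fun p : ℝ × ℝ => (p.1, -p.2)) = Prod.map (id : ℝ → ℝ) (fun x : ℝ => -x)
        from rfl,
      ← Measure.map_prod_map _ _ measurable_id (measurable_neg), Measure.map_id,
      gaussian_neg_invariant]
  have hmB : ℙ {ω | U ω * (β * U ω + W ω) < 0}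
      = ENNReal.ofReal (1/2 - Real.arctan a / π) := by
    rw [hB, ← Measure.map_apply (hVm.prodMk hV'm)
        (measurableSet_lt (by fun_prop) measurable_const), hjoint, hBset,
      ← Measure.map_apply hRm (wedge2_measurable (-a)), hRinv, wedge_prob (-a),
      Real.arctan_neg]
    congr 1
    ring
  rw [hmA, hmB]
  have h1 : Real.arctan a / π < 1/2 := by
    rw [div_lt_iff₀ hpi]
    have := Real.arctan_lt_pi_div_two a
    linarith
  have h2 : -(1/2) < Real.arctan a / π := by
    rw [neg_lt, ← neg_div, div_lt_iff₀ hpi]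
    have := Real.neg_pi_div_two_lt_arctan a
    linarith
  rw [ENNReal.toReal_ofReal (by linarith), ENNReal.toReal_ofReal (by linarith)]
  rw [ha]
  ring
end Main
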